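/- Let N ∈ ℕ, V = {−⌊N/2⌋, ..., ⌊N/2⌋ − 1}, and let s, t ∈ ℕ be coprime with s + t ≤ N. Define a graph on vertex set V where i and j are adjacent iff |i − j| = s or |i − j| = t. Then this graph is connected; equivalently, every node of V is reachable from 0 by a path in the graph. -/

import Mathlib

/-- Reachability from `x` to `y` by hops of size `s`/`t` inside `[lo,hi]`. -/
def CSReach (s t : ℕ) (lo hi x y : ℤ) : Prop :=
  ∃ (m : ℕ) (v : ℕ → ℤ), v 0 = x ∧ v m = y ∧
    (∀ i ≤ m, lo ≤ v i ∧ v i ≤ hi) ∧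
    (∀ i < m, |v (i + 1) - v i| = s ∨ |v (i + 1) - v i| = t)

lemma csreach_refl {s t : ℕ} {lo hi x : ℤ} (h1 : lo ≤ x) (h2 : x ≤ hi) :
    CSReach s t lo hi x x :=
  ⟨0, fun _ => x, rfl, rfl, fun _ _ => ⟨h1, h2⟩, fun i hi => absurd hi (Nat.not_lt_zero i)⟩

lemma csreach_symm {s t : ℕ} {lo hi x y : ℤ} (h : CSReach s t lo hi x y) :
    CSReach s t lo hi y x := by
  obtain ⟨m, v, h0, hm, hb, hs⟩ := h
  refine ⟨m, fun i => v (m - i), by simp [hm], by simp [h0], ?_, ?_⟩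
  · intro i hi; exact hb _ (Nat.sub_le _ _)
  · intro i hi
    have e1 : m - i = (m - (i+1)) + 1 := by omega
    have := hs (m - (i+1)) (by omega)
    rw [← e1] at this
    rcases this with h | h
    · left; rw [abs_sub_comm] at h; exact h
    · right; rw [abs_sub_comm] at h; exact h

lemma csreach_trans {s t : ℕ} {lo hi x y z : ℤ}
    (h1 : CSReach s t lo hi x y) (h2 : CSReach s t lo hi y z) :
    CSReach s t lo hi x z := by
  obtain ⟨m1, v1, h10, h1m, h1b, h1s⟩ := h1
  obtain ⟨m2, v2, h20, h2m, h2b, h2s⟩ := h2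
  refine ⟨m1 + m2, fun i => if i ≤ m1 then v1 i else v2 (i - m1), by simp [h10], ?_, ?_, ?_⟩
  · by_cases h : m1 + m2 ≤ m1
    · have : m2 = 0 := by omega
      have e2 : m2 = 0 := this
      simp only [le_refl, if_pos h]
      rw [show m1 + m2 = m1 by omega, h1m, ← h2m, e2, h20]
    · simp only [h, if_false]
      rw [show m1 + m2 - m1 = m2 by omega, h2m]
  · intro i hi
    by_cases h : i ≤ m1
    · simp [h]; exact h1b i h
    · simp [h]; exact h2b (i - m1) (by omega)
  · intro i hi
    by_cases h : i + 1 ≤ m1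
    · simp [h, show i ≤ m1 by omega]; exact h1s i (by omega)
    · by_cases h' : i ≤ m1
      · have : i = m1 := by omega
        simp [h, h', this, show m1 + 1 - m1 = 1 by omega]
        have := h2s 0 (by omega)
        rw [h20, ← h1m] at this
        simpa using this
      · simp [h, h', show i + 1 - m1 = (i - m1) + 1 by omega]
        exact h2s (i - m1) (by omega)

lemma csreach_mono {s t : ℕ} {lo hi lo' hi' x y : ℤ} (hl : lo' ≤ lo) (hh : hi ≤ hi')
    (h : CSReach s t lo hi x y) : CSReach s t lo' hi' x y := by
  obtain ⟨m, v, h0, hm, hb, hs⟩ := h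
  exact ⟨m, v, h0, hm, fun i hi => ⟨hl.trans (hb i hi).1, (hb i hi).2.trans hh⟩, hs⟩

lemma csreach_shift {s t : ℕ} {lo hi x y : ℤ} (c : ℤ)
    (h : CSReach s t lo hi x y) : CSReach s t (lo + c) (hi + c) (x + c) (y + c) := by
  obtain ⟨m, v, h0, hm, hb, hs⟩ := h
  refine ⟨m, fun i => v i + c, by simp [h0], by simp [hm], ?_, ?_⟩
  · intro i hi
    have := hb i hi
    constructor <;> simp <;> linarith [this.1, this.2]
  · intro i hi; simpa using hs i hi

lemma csreach_single {s t : ℕ} {lo hi x y : ℤ} (hx1 : lo ≤ x) (hx2 : x ≤ hi)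
    (hy1 : lo ≤ y) (hy2 : y ≤ hi) (hd : |y - x| = s ∨ |y - x| = t) :
    CSReach s t lo hi x y := by
  refine ⟨1, fun i => if i = 0 then x else y, by simp, by simp, ?_, ?_⟩
  · intro i hi; rcases Nat.eq_zero_or_pos i with h | h <;> simp [h] <;> [exact ⟨hx1, hx2⟩; skip]
    split <;> simp_all
  · intro i hi
    have : i = 0 := by omega
    simpa [this] using hd


lemma cs_step (s t : ℕ) (hs : 1 ≤ s) (ht : 1 ≤ t) (e : ℤ) (he : e = (s:ℤ) ∨ e = -(s:ℤ)) (i : ℕ) :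
    |(((i:ℤ) + 1) * e) % ((s:ℤ) + t) - ((i:ℤ) * e) % ((s:ℤ) + t)| = s ∨
    |(((i:ℤ) + 1) * e) % ((s:ℤ) + t) - ((i:ℤ) * e) % ((s:ℤ) + t)| = t := by
  set n : ℤ := (s:ℤ) + t with hn
  have hn0 : 0 < n := by positivity
  set a := (((i:ℤ) + 1) * e) % n with ha
  set b := ((i:ℤ) * e) % n with hb
  have ha1 : 0 ≤ a := Int.emod_nonneg _ (by omega)
  have ha2 : a < n := Int.emod_lt_of_pos _ hn0
  have hb1 : 0 ≤ b := Int.emod_nonneg _ (by omega)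
  have hb2 : b < n := Int.emod_lt_of_pos _ hn0
  have hd : n ∣ (a - b - e) := by
    have h1 : n ∣ ((i:ℤ) + 1) * e - a := Int.dvd_self_sub_of_emod_eq rfl
    have h2 : n ∣ (i:ℤ) * e - b := Int.dvd_self_sub_of_emod_eq rfl
    have : a - b - e = ((i:ℤ) * e - b) - (((i:ℤ) + 1) * e - a) := by ring
    rw [this]; exact dvd_sub h2 h1
  obtain ⟨c, hc⟩ := hd
  have he' : -n < e ∧ e < n := by rcases he with h | h <;> rw [h] <;> constructor <;> [omega; omega; omega; omega]
  have hc1 : c < 2 := by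
    by_contra h
    push_neg at h
    nlinarith [mul_nonneg hn0.le (by linarith : (0:ℤ) ≤ c - 2)]
  have hc2 : -2 < c := by
    by_contra h
    push_neg at h
    nlinarith [mul_nonneg hn0.le (by linarith : (0:ℤ) ≤ -2 - c)]
  have hcases : a - b = e ∨ a - b = e + n ∨ a - b = e - n := by
    interval_cases c <;> omega
  rcases abs_cases (a - b) with ⟨h, _⟩ | ⟨h, _⟩ <;> rw [h] <;> omega

lemma cs_window (s t : ℕ) (hs : 1 ≤ s) (ht : 1 ≤ t) (hco : Nat.Coprime s t)
    (x : ℤ) (hx1 : 0 ≤ x) (hx2 : x ≤ (s:ℤ) + t - 2) :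
    CSReach s t 0 ((s:ℤ) + t - 2) 0 x := by
  set n : ℤ := (s:ℤ) + t with hn
  have hn0 : 0 < n := by positivity
  have hn2 : 2 ≤ n := by omega
  have hcop : IsCoprime (s:ℤ) n := by
    rw [hn, Int.isCoprime_iff_gcd_eq_one]
    have : ((s:ℤ) + t) = ((s + t : ℕ) : ℤ) := by push_cast; ring
    rw [this, Int.gcd_natCast_natCast]
    simpa [Nat.Coprime] using (Nat.coprime_add_self_right.mpr hco)
  -- surjectivity: every residue hit by some k*s mod n
  have key : ∀ y : ℤ, 0 ≤ y → y < n → ∃ k : ℕ, (k:ℤ) ≤ n - 1 ∧ ((k:ℤ) * s) % n = y := by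
    intro y hy1 hy2
    obtain ⟨u, v, huv⟩ := hcop
    set k0 : ℤ := (u * y) % n with hk0
    have hk01 : 0 ≤ k0 := Int.emod_nonneg _ (by omega)
    have hk02 : k0 < n := Int.emod_lt_of_pos _ hn0
    refine ⟨k0.toNat, by omega, ?_⟩
    rw [Int.toNat_of_nonneg hk01]
    have hmod : (k0 * s) % n = y % n := by
      have h1 : n ∣ (u * y - k0) := Int.dvd_self_sub_of_emod_eq rfl
      have h2 : n ∣ (k0 * s - y) := by
        obtain ⟨c, hc⟩ := h1
        refine ⟨-(c * s) - v * y, ?_⟩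
        have : (u:ℤ) * s = 1 - v * n := by linarith [huv]
        nlinarith [hc, huv]
      rw [Int.emod_eq_emod_iff_emod_sub_eq_zero]
      exact Int.emod_eq_zero_of_dvd h2
    rw [hmod, Int.emod_eq_of_lt hy1 hy2]
  -- injectivity
  have inj : ∀ a b : ℤ, (a * s) % n = (b * s) % n → n ∣ (a - b) := by
    intro a b hab
    have h1 : n ∣ (a * s - b * s) := by
      have h2 : n ∣ (a * s - (a*s) % n) := Int.dvd_self_sub_of_emod_eq rfl
      have h3 : n ∣ (b * s - (b*s) % n) := Int.dvd_self_sub_of_emod_eq rfl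
      have : a * s - b * s = (a * s - (a*s) % n) - (b * s - (b*s) % n) := by omega
      rw [this]; exact dvd_sub h2 h3
    have : n ∣ (a - b) * s := by rwa [sub_mul]
    exact (hcop.symm).dvd_of_dvd_mul_right this
  obtain ⟨k, hk1, hkx⟩ := key x hx1 (by omega)
  obtain ⟨j, hj1, hjx⟩ := key (n - 1) (by omega) (by omega)
  have hj0 : 1 ≤ (j:ℤ) := by
    rcases Nat.eq_zero_or_pos j with h | h
    · exfalso; rw [h] at hjx; simp at hjx; omega
    · exact_mod_cast h
  have hkj : k ≠ j := by
    intro h; rw [h, hjx] at hkx; omega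
  rcases lt_or_gt_of_ne hkj with hlt | hgt
  · -- forward path
    refine ⟨k, fun i => ((i:ℤ) * s) % n, by simp, hkx, ?_, ?_⟩
    · intro i hik
      have h1 : 0 ≤ ((i:ℤ) * s) % n := Int.emod_nonneg _ (by omega)
      have h2 : ((i:ℤ) * s) % n < n := Int.emod_lt_of_pos _ hn0
      have h3 : ((i:ℤ) * s) % n ≠ n - 1 := by
        intro hbad
        have := inj i j (by rw [hbad, hjx])
        have hz : (i:ℤ) - j = 0 := Int.eq_zero_of_abs_lt_dvd this (by
          have : (i:ℤ) ≤ k := by exact_mod_cast hik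
          have : (j:ℤ) < n := by omega
          rw [abs_lt]  -- need |i - j| < n
          constructor <;> omega)
        have : (i:ℤ) < (j:ℤ) := by
          have h4 : (i:ℤ) ≤ k := by exact_mod_cast hik
          have h5 : (k:ℤ) < j := by exact_mod_cast hlt
          omega
        omega
      have hfin : ((i:ℤ) * s) % n ≤ n - 2 := by omega
      exact ⟨h1, hfin⟩
    · intro i _
      have := cs_step s t hs ht (s:ℤ) (Or.inl rfl) i
      push_cast at this ⊢
      convert this using 3 <;> ring_nf
  · -- backward path: v i = (-(i) * s) % n, length (n - k).toNat
    have hkn : (k:ℤ) < n := by omega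
    refine ⟨(n - k).toNat, fun i => (-(i:ℤ) * s) % n, by simp, ?_, ?_, ?_⟩
    · show (-(((n - (k:ℤ)).toNat : ℤ)) * s) % n = x
      rw [Int.toNat_of_nonneg (by omega)]
      have : (-(n - (k:ℤ)) * s) % n = ((k:ℤ) * s + n * (-(s:ℤ))) % n := by ring_nf
      rw [this, Int.add_mul_emod_self_left, hkx]
    · intro i hik
      have h1 : 0 ≤ (-(i:ℤ) * s) % n := Int.emod_nonneg _ (by omega)
      have h2 : (-(i:ℤ) * s) % n < n := Int.emod_lt_of_pos _ hn0
      have h3 : (-(i:ℤ) * s) % n ≠ n - 1 := by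
        intro hbad
        have := inj (-(i:ℤ)) j (by rw [hbad, hjx])
        have hib : (i:ℤ) ≤ n - k := by
          have := hik
          have h4 : (i:ℤ) ≤ ((n - (k:ℤ)).toNat : ℤ) := by exact_mod_cast this
          rwa [Int.toNat_of_nonneg (by omega)] at h4
        have hjk : (j:ℤ) < k := by exact_mod_cast hgt
        have hz : -(i:ℤ) - j = 0 := Int.eq_zero_of_abs_lt_dvd this (by
          rw [abs_lt]; constructor <;> omega)
        omega
      have hfin : (-(i:ℤ) * s) % n ≤ n - 2 := by omega
      exact ⟨h1, hfin⟩
    · intro i _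
      have := cs_step s t hs ht (-(s:ℤ)) (Or.inr rfl) i
      push_cast at this ⊢
      convert this using 3 <;> ring_nf <;> rw [hn]


lemma cs_adj (N s t : ℕ) (hco : Nat.Coprime s t) (hst : s + t ≤ N) (x : ℤ)
    (hx1 : -((N / 2 : ℕ) : ℤ) ≤ x) (hx2 : x + 1 ≤ ((N / 2 : ℕ) : ℤ) - 1) :
    CSReach s t (-((N / 2 : ℕ) : ℤ)) (((N / 2 : ℕ) : ℤ) - 1) x (x + 1) := by
  set L : ℤ := ((N / 2 : ℕ) : ℤ) with hL
  by_cases h1 : s = 1 ∨ t = 1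
  · refine csreach_single hx1 (by omega) (by omega) hx2 ?_
    have e : |x + 1 - x| = 1 := by simp
    rcases h1 with h | h
    · left; rw [e, h]; norm_num
    · right; rw [e, h]; norm_num
  · push_neg at h1
    have hs0 : s ≠ 0 := by
      intro h; rw [h] at hco
      exact h1.2 (Nat.coprime_zero_left t |>.mp hco)
    have ht0 : t ≠ 0 := by
      intro h; rw [h] at hco
      exact h1.1 (Nat.coprime_zero_right s |>.mp hco)
    have hs2 : 2 ≤ s := by omega
    have ht2 : 2 ≤ t := by omega
    set n : ℤ := (s:ℤ) + t with hn
    have h2L : n - 1 ≤ 2 * L := by omega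
    suffices H : ∀ a : ℤ, -L ≤ a → a ≤ x → x + 1 ≤ a + (n - 2) → a + (n - 2) ≤ L - 1 →
        CSReach s t (-L) (L - 1) x (x + 1) by
      rcases le_total (-L) (x - (n - 3)) with hc | hc
      · exact H (x - (n - 3)) hc (by omega) (by omega) (by omega)
      · exact H (-L) (by omega) (by omega) (by omega) (by omega)
    intro a ha1 ha2 ha3 ha4
    have W0 := cs_window s t (by omega) (by omega) hco (x - a) (by omega) (by omega)
    have W1 := cs_window s t (by omega) (by omega) hco (x + 1 - a) (by omega) (by omega)
    have W := csreach_trans (csreach_symm W0) W1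
    have W' := csreach_shift a W
    have e1 : x - a + a = x := by ring
    have e2 : x + 1 - a + a = x + 1 := by ring
    rw [e1, e2] at W'
    exact csreach_mono (by omega) (by omega) W'

theorem connectivity_coprime_shifts (N s t : ℕ) (hco : Nat.Coprime s t) (hst : s + t ≤ N)
    (x : ℤ) (hx1 : -((N / 2 : ℕ) : ℤ) ≤ x) (hx2 : x ≤ ((N / 2 : ℕ) : ℤ) - 1) :
    ∃ (m : ℕ) (v : ℕ → ℤ), v 0 = 0 ∧ v m = x ∧
      (∀ i ≤ m, -((N / 2 : ℕ) : ℤ) ≤ v i ∧ v i ≤ ((N / 2 : ℕ) : ℤ) - 1) ∧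
      (∀ i < m, |v (i + 1) - v i| = s ∨ |v (i + 1) - v i| = t) := by
  set L : ℤ := ((N / 2 : ℕ) : ℤ) with hL
  have hL1 : 1 ≤ L := by omega
  have csreach_refl : ∀ y : ℤ, -L ≤ y → y ≤ L - 1 → CSReach s t (-L) (L-1) y y := by
    intro y h1 h2
    exact ⟨0, fun _ => y, rfl, rfl, fun _ _ => ⟨h1, h2⟩, fun i hi => absurd hi (Nat.not_lt_zero i)⟩
  have csreach_symm : ∀ a b : ℤ, CSReach s t (-L) (L-1) a b → CSReach s t (-L) (L-1) b a := by
    intro a b h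
    obtain ⟨m, v, h0, hm, hb, hsv⟩ := h
    refine ⟨m, fun i => v (m - i), by simp [hm], by simp [h0], ?_, ?_⟩
    · intro i hi; exact hb _ (Nat.sub_le _ _)
    · intro i hi
      have e1 : m - i = (m - (i+1)) + 1 := by omega
      have := hsv (m - (i+1)) (by omega)
      rw [← e1] at this
      rcases this with h | h
      · left; rw [abs_sub_comm] at h; exact h
      · right; rw [abs_sub_comm] at h; exact h
  have csreach_trans : ∀ a b c : ℤ, CSReach s t (-L) (L-1) a b → CSReach s t (-L) (L-1) b c →
      CSReach s t (-L) (L-1) a c := by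
    intro x' y z h1 h2
    obtain ⟨m1, v1, h10, h1m, h1b, h1s⟩ := h1
    obtain ⟨m2, v2, h20, h2m, h2b, h2s⟩ := h2
    refine ⟨m1 + m2, fun i => if i ≤ m1 then v1 i else v2 (i - m1), by simp [h10], ?_, ?_, ?_⟩
    · by_cases h : m1 + m2 ≤ m1
      · have e2 : m2 = 0 := by omega
        simp only [le_refl, if_pos h]
        rw [show m1 + m2 = m1 by omega, h1m, ← h2m, e2, h20]
      · simp only [h, if_false]
        rw [show m1 + m2 - m1 = m2 by omega, h2m]
    · intro i hi
      by_cases h : i ≤ m1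
      · simp [h]; have := h1b i h; omega
      · simp [h]; have := h2b (i - m1) (by omega); omega
    · intro i hi
      by_cases h : i + 1 ≤ m1
      · simp [h, show i ≤ m1 by omega]; exact h1s i (by omega)
      · by_cases h' : i ≤ m1
        · have : i = m1 := by omega
          simp [h, h', this, show m1 + 1 - m1 = 1 by omega]
          have := h2s 0 (by omega)
          rw [h20, ← h1m] at this
          simpa using this
        · simp [h, h', show i + 1 - m1 = (i - m1) + 1 by omega]
          exact h2s (i - m1) (by omega)
  have main : ∀ d : ℕ, ∀ y : ℤ, (y = (d:ℤ) ∨ y = -(d:ℤ)) → -L ≤ y → y ≤ L - 1 →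
      CSReach s t (-L) (L-1) 0 y := by
    intro d
    induction d with
    | zero => intro y hy h1 h2
              have : y = 0 := by omega
              subst this; exact csreach_refl 0 (by omega) (by omega)
    | succ d ih =>
        intro y hy h1 h2
        rcases hy with hy | hy
        · have hd : CSReach s t (-L) (L-1) 0 (d:ℤ) :=
            ih (d:ℤ) (Or.inl rfl) (by omega) (by omega)
          have hadj := cs_adj N s t hco hst (d:ℤ) (by omega) (by push_cast; omega)
          have := csreach_trans _ _ _ hd hadj
          have e : y = (d:ℤ) + 1 := by push_cast at hy ⊢; omega
          rw [e]; exact this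
        · have hd : CSReach s t (-L) (L-1) 0 (-(d:ℤ)) :=
            ih (-(d:ℤ)) (Or.inr rfl) (by omega) (by omega)
          have hadj := cs_adj N s t hco hst y (by omega) (by omega)
          have hadj' := csreach_symm _ _ hadj
          have hyd : y + 1 = -(d:ℤ) := by push_cast at hy ⊢; omega
          rw [hyd] at hadj'
          exact csreach_trans _ _ _ hd hadj'
  exact main x.natAbs x (Int.natAbs_eq x) hx1 hx2
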